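/- arXiv:2605.01279 — 3 statements merged into one kernel-verified Lean document; each statement's English description precedes it below -/
import Mathlib

section
/- Let w be a cyclic word over {O,U} of even length with at least two O's and at least two U's. Then w contains two disjoint cyclic factors that are either 'OU' and 'UO', or 'OU' and 'OU'. -/
inductive Letter : Type
  | O : Letter
  | U : Letter
  deriving DecidableEq, BEq, Repr

open Letter

/-- number of O's in a word -/
def countO (w : List Letter) : ℕ := w.count O

/-- number of U's in a word -/
def countU (w : List Letter) : ℕ := w.count U

/-- number of O's in odd 1-based positions (even 0-based index) -/
def NOo (w : List Letter) : ℕ := ((w.zipIdx.map Prod.swap).filter (fun p => p.1 % 2 == 0 && p.2 == O)).length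

/-- number of O's in even 1-based positions -/
def NOe (w : List Letter) : ℕ := ((w.zipIdx.map Prod.swap).filter (fun p => p.1 % 2 == 1 && p.2 == O)).length

/-- number of U's in odd 1-based positions -/
def NUo (w : List Letter) : ℕ := ((w.zipIdx.map Prod.swap).filter (fun p => p.1 % 2 == 0 && p.2 == U)).length

/-- number of U's in even 1-based positions -/
def NUe (w : List Letter) : ℕ := ((w.zipIdx.map Prod.swap).filter (fun p => p.1 % 2 == 1 && p.2 == U)).length

/-- twice the OU signed quantity: N^O_e + N^U_o − N^O_o − N^U_e -/
def twoPhi (w : List Letter) : ℤ := (NOe w : ℤ) + NUo w - NOo w - NUe w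

/-- the (signed) OU number Φ of a word of even length -/
def Phi (w : List Letter) : ℤ := twoPhi w / 2

/-- cyclic access to the letters of a word -/
def cget (w : List Letter) (i : ℕ) : Letter := w.getD (i % w.length) O

/-- a cyclic occurrence of the factor `OU` at position `i` -/
def OUat (w : List Letter) (i : ℕ) : Prop := cget w i = O ∧ cget w (i + 1) = U

/-- a cyclic occurrence of the factor `UO` at position `i` -/
def UOat (w : List Letter) (i : ℕ) : Prop := cget w i = U ∧ cget w (i + 1) = O

instance (w : List Letter) (i : ℕ) : Decidable (OUat w i) := by unfold OUat; infer_instance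
instance (w : List Letter) (i : ℕ) : Decidable (UOat w i) := by unfold UOat; infer_instance

/-- the cyclic factors at positions `i` and `j` (each occupying `{i, i+1 mod n}`) are disjoint -/
def PairDisjoint (n i j : ℕ) : Prop :=
  i ≠ j ∧ i ≠ (j + 1) % n ∧ (i + 1) % n ≠ j ∧ (i + 1) % n ≠ (j + 1) % n

/-- a word is alternating in the cyclic sense -/
def CyclicAlternating (w : List Letter) : Prop :=
  w.Chain' (· ≠ ·) ∧ ∀ a ∈ w.head?, ∀ b ∈ w.getLast?, a ≠ b

/-- one reduction: delete two adjacent equal letters -/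
def Reduces (w w' : List Letter) : Prop :=
  ∃ a b x, w = a ++ x :: x :: b ∧ w' = a ++ b

/-- `ReducesN k w w'` : `w'` is obtained from `w` by exactly `k` reductions -/
inductive ReducesN : ℕ → List Letter → List Letter → Prop
  | refl (w : List Letter) : ReducesN 0 w w
  | step {k : ℕ} {w w' w'' : List Letter} :
      Reduces w w' → ReducesN k w' w'' → ReducesN (k + 1) w w''

lemma letter_ne_O {l : Letter} (h : l ≠ O) : l = U := by cases l <;> simp_all
lemma letter_ne_U {l : Letter} (h : l ≠ U) : l = O := by cases l <;> simp_all

lemma cget_congr {w : List Letter} {i j : ℕ} (h : i % w.length = j % w.length) :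
    cget w i = cget w j := by unfold cget; rw [h]

lemma cget_mod (w : List Letter) (i : ℕ) : cget w (i % w.length) = cget w i :=
  cget_congr (Nat.mod_mod_of_dvd i dvd_rfl)

lemma cget_succ (w : List Letter) (x : ℕ) :
    cget w (x % w.length + 1) = cget w (x + 1) :=
  cget_congr (Nat.mod_add_mod x w.length 1)

lemma cget_lt {w : List Letter} {a : ℕ} (h : a < w.length) : cget w a = w.getD a O := by
  unfold cget; rw [Nat.mod_eq_of_lt h]

lemma mod_lt_two {x n : ℕ} (h : x < n + n) : x % n = x ∨ (n ≤ x ∧ x % n = x - n) := by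
  rcases Nat.lt_or_ge x n with h1 | h1
  · exact Or.inl (Nat.mod_eq_of_lt h1)
  · exact Or.inr ⟨h1, by rw [Nat.mod_eq_sub_mod h1, Nat.mod_eq_of_lt (by omega)]⟩

lemma beq_eq (y x : Letter) : (y == x) = decide (y = x) := by cases y <;> cases x <;> rfl

lemma exists_one_getD {l : List Letter} {x : Letter} (h : 1 ≤ l.count x) :
    ∃ a, a < l.length ∧ l.getD a O = x := by
  induction l with
  | nil => simp at h
  | cons y t ih =>
    by_cases hyx : y = x
    · exact ⟨0, by simp, by simpa using hyx⟩
    · rw [List.count_cons, beq_eq] at h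
      simp [hyx] at h
      obtain ⟨a, ha, hax⟩ := ih h
      exact ⟨a + 1, by simpa using ha, by simpa using hax⟩

lemma exists_two_getD {l : List Letter} {x : Letter} (h : 2 ≤ l.count x) :
    ∃ a b, a < b ∧ b < l.length ∧ l.getD a O = x ∧ l.getD b O = x := by
  induction l with
  | nil => simp at h
  | cons y t ih =>
    rw [List.count_cons, beq_eq] at h
    by_cases hyx : y = x
    · simp [hyx] at h
      obtain ⟨b, hb, hbx⟩ := exists_one_getD (show 1 ≤ t.count x by omega)
      exact ⟨0, b + 1, by omega, by simpa using hb, by simpa using hyx, by simpa using hbx⟩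
    · simp [hyx] at h
      obtain ⟨a, b, hab, hb, ha', hb'⟩ := ih h
      exact ⟨a + 1, b + 1, by omega, by simpa using hb, by simpa using ha', by simpa using hb'⟩

lemma exists_two_cget {w : List Letter} {x : Letter} (h : 2 ≤ w.count x) :
    ∃ a b, a < w.length ∧ b < w.length ∧ a ≠ b ∧ cget w a = x ∧ cget w b = x := by
  obtain ⟨a, b, hab, hb, ha', hb'⟩ := exists_two_getD h
  exact ⟨a, b, by omega, hb, by omega, (cget_lt (by omega)).trans ha', (cget_lt hb).trans hb'⟩

lemma exists_shift {n p a : ℕ} (hn : 0 < n) (ha : a < n) :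
    ∃ t, t < n ∧ (p + t) % n = a := by
  refine ⟨(a + n - p % n) % n, Nat.mod_lt _ hn, ?_⟩
  rw [Nat.add_mod_mod]
  have hp : p % n < n := Nat.mod_lt _ hn
  have h2 : (p + (a + n - p % n)) % n = (p % n + (a + n - p % n)) % n :=
    (Nat.mod_add_mod p n _).symm
  rw [h2, show p % n + (a + n - p % n) = a + n by omega, Nat.add_mod_right,
    Nat.mod_eq_of_lt ha]

lemma ou_ou_disjoint {w : List Letter} {i j : ℕ} (hi : i < w.length) (hj : j < w.length)
    (hij : i ≠ j) (h1 : OUat w i) (h2 : OUat w j) : PairDisjoint w.length i j := by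
  refine ⟨hij, ?_, ?_, ?_⟩
  · intro hc
    have h3 := cget_mod w (j + 1)
    rw [← hc, h1.1, h2.2] at h3
    exact absurd h3 (by simp)
  · intro hc
    have h3 := cget_mod w (i + 1)
    rw [hc, h1.2, h2.1] at h3
    exact absurd h3 (by simp)
  · intro hc
    rcases mod_lt_two (show i + 1 < w.length + w.length by omega) with h | ⟨_, h⟩ <;>
    rcases mod_lt_two (show j + 1 < w.length + w.length by omega) with h' | ⟨_, h'⟩ <;>
    omega


theorem stmt8_aux (w : List Letter) (h : Even w.length)
    (hO : 2 ≤ w.count O) (hU : 2 ≤ w.count U) :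
    ∃ i j, i < w.length ∧ j < w.length ∧ PairDisjoint w.length i j ∧
      OUat w i ∧ (UOat w j ∨ OUat w j) := by
  have hn2 : 2 ≤ w.length := le_trans hO List.count_le_length
  have hn0 : 0 < w.length := by omega
  obtain ⟨a, aa, ha, haa, hnea, haO, -⟩ := exists_two_cget hO
  obtain ⟨b, bb, hb, hbb, hneb, hbU, -⟩ := exists_two_cget hU
  -- Step A: there is an OU occurrence
  have hQex : ∃ t, cget w (a + t) = U := by
    obtain ⟨t, ht, hteq⟩ := exists_shift (p := a) hn0 hb
    exact ⟨t, by rw [← cget_mod w (a + t), hteq]; exact hbU⟩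
  obtain ⟨m', hm'U, hm'min⟩ : ∃ m', cget w (a + m') = U ∧ ∀ t < m', cget w (a + t) ≠ U :=
    ⟨Nat.find hQex, Nat.find_spec hQex, fun t ht => Nat.find_min hQex ht⟩
  have hm'1 : 1 ≤ m' := by
    rcases Nat.eq_zero_or_pos m' with h0 | h1
    · rw [h0, Nat.add_zero, haO] at hm'U; exact absurd hm'U (by simp)
    · exact h1
  have hprev : cget w (a + (m' - 1)) = O := letter_ne_U (hm'min _ (by omega))
  set p := (a + (m' - 1)) % w.length with hpdef
  have hp : p < w.length := Nat.mod_lt _ hn0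
  have hOUp : OUat w p := by
    refine ⟨(cget_mod _ _).trans hprev, ?_⟩
    rw [hpdef, cget_succ, show a + (m' - 1) + 1 = a + m' by omega]
    exact hm'U
  by_cases htwo : ∃ i j, i < w.length ∧ j < w.length ∧ i ≠ j ∧ OUat w i ∧ OUat w j
  · obtain ⟨i, j, hi, hj, hij, h1, h2⟩ := htwo
    exact ⟨i, j, hi, hj, ou_ou_disjoint hi hj hij h1 h2, h1, Or.inr h2⟩
  · have huniq : ∀ i, i < w.length → OUat w i → i = p := by
      intro i hi hOUi
      by_contra hne2
      exact htwo ⟨i, p, hi, hp, hne2, hOUi, hOUp⟩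
    have hwit : 1 ≤ w.length - 1 ∧ cget w (p + (w.length - 1) + 1) = O := by
      refine ⟨by omega, ?_⟩
      rw [show p + (w.length - 1) + 1 = p + w.length by omega]
      exact (cget_congr (Nat.add_mod_right p w.length)).trans hOUp.1
    have hPex : ∃ t, 1 ≤ t ∧ cget w (p + t + 1) = O := ⟨w.length - 1, hwit⟩
    obtain ⟨m, hm1, hmO, hmle, hmmin⟩ :
        ∃ m, 1 ≤ m ∧ cget w (p + m + 1) = O ∧ m ≤ w.length - 1 ∧
          ∀ t < m, ¬(1 ≤ t ∧ cget w (p + t + 1) = O) :=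
      ⟨Nat.find hPex, (Nat.find_spec hPex).1, (Nat.find_spec hPex).2,
        Nat.find_min' hPex hwit, fun t ht => Nat.find_min hPex ht⟩
    have hUrun : ∀ t, 1 ≤ t → t ≤ m → cget w (p + t) = U := by
      intro t h1 h2
      rcases Nat.eq_or_lt_of_le h1 with h1' | h1'
      · rw [← h1']; exact hOUp.2
      · have hmin := hmmin (t - 1) (by omega)
        have hne : ¬ cget w (p + (t - 1) + 1) = O := fun hc => hmin ⟨by omega, hc⟩
        rw [show p + (t - 1) + 1 = p + t by omega] at hne
        exact letter_ne_O hne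
    have hm2 : 2 ≤ m := by
      by_contra hcon
      have hm1' : m = 1 := by omega
      have key : ∀ t, 2 ≤ t → t ≤ w.length → cget w (p + t) = O := by
        intro t
        induction t with
        | zero => omega
        | succ s ih =>
          intro h2 hle
          rcases Nat.lt_or_ge s 2 with hs | hs
          · have hs1 : s = 1 := by omega
            rw [show p + (s + 1) = p + m + 1 by omega]
            exact hmO
          · have hOs := ih hs (by omega)
            by_contra hcc
            have hUs : cget w (p + s + 1) = U := letter_ne_O hcc
            have hOUs : OUat w ((p + s) % w.length) :=
              ⟨(cget_mod w (p + s)).trans hOs, (cget_succ w (p + s)).trans hUs⟩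
            have heq := huniq _ (Nat.mod_lt _ hn0) hOUs
            rcases mod_lt_two (show p + s < w.length + w.length by omega) with hh | ⟨_, hh⟩ <;>
              omega
      obtain ⟨c1, c2, hc1, hc2, hcne, hc1U, hc2U⟩ := exists_two_cget hU
      have main : ∀ c, c < w.length → cget w c = U → c = (p + 1) % w.length := by
        intro c hc hcU
        obtain ⟨t, htlt, hteq⟩ := exists_shift (p := p) hn0 hc
        rw [← hteq, cget_mod] at hcU
        rcases Nat.lt_or_ge t 2 with ht2 | ht2
        · rcases Nat.eq_zero_or_pos t with ht0 | ht1
          · rw [ht0, Nat.add_zero, hOUp.1] at hcU; exact absurd hcU (by simp)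
          · have ht1' : t = 1 := by omega
            rw [← hteq, ht1']
        · rw [key t ht2 (by omega)] at hcU; exact absurd hcU (by simp)
      have := (main c1 hc1 hc1U).trans (main c2 hc2 hc2U).symm
      exact hcne this
    have hmle2 : m ≤ w.length - 2 := by
      by_contra hcon
      have hm' : m = w.length - 1 := by omega
      obtain ⟨c1, c2, hc1, hc2, hcne, hc1O, hc2O⟩ := exists_two_cget hO
      have main : ∀ c, c < w.length → cget w c = O → c = p := by
        intro c hc hcO
        obtain ⟨t, htlt, hteq⟩ := exists_shift (p := p) hn0 hc
        rw [← hteq, cget_mod] at hcO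
        rcases Nat.eq_zero_or_pos t with ht0 | ht1
        · rw [ht0] at hteq
          rw [Nat.add_zero, Nat.mod_eq_of_lt hp] at hteq
          omega
        · rw [hUrun t ht1 (by omega)] at hcO; exact absurd hcO (by simp)
      have := (main c1 hc1 hc1O).trans (main c2 hc2 hc2O).symm
      exact hcne this
    refine ⟨p, (p + m) % w.length, hp, Nat.mod_lt _ hn0, ?_, hOUp, Or.inl ?_⟩
    · have e2 : ((p + m) % w.length + 1) % w.length = (p + m + 1) % w.length :=
        Nat.mod_add_mod _ _ _
      unfold PairDisjoint
      rw [e2]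
      rcases mod_lt_two (show p + m < w.length + w.length by omega) with e1 | ⟨_, e1⟩ <;>
      rcases mod_lt_two (show p + m + 1 < w.length + w.length by omega) with e3 | ⟨_, e3⟩ <;>
      rcases mod_lt_two (show p + 1 < w.length + w.length by omega) with e4 | ⟨_, e4⟩ <;>
        refine ⟨by omega, by omega, by omega, by omega⟩
    · exact ⟨(cget_mod w (p + m)).trans (hUrun m hm1 le_rfl),
        (cget_succ w (p + m)).trans hmO⟩

theorem stmt8 (w : List Letter) (h : Even w.length)
    (hO : 2 ≤ countO w) (hU : 2 ≤ countU w) :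
    ∃ i j, i < w.length ∧ j < w.length ∧ PairDisjoint w.length i j ∧
      OUat w i ∧ (UOat w j ∨ OUat w j) := stmt8_aux w h hO hU
end

section
/- Let w be a word over {O,U} of even length that can be transformed into an alternating word by exactly k reductions. Then k = (|w| − 2·|Φ(w)|)/2; equivalently, the number of reductions needed to reach an alternating word is determined by the length and the OU number of w. -/
open Letter

/-- value of a letter at a position of given parity (`true` = odd index) -/
def lval (e : Bool) (c : Letter) : ℤ :=
  match e, c with
  | false, U => 1
  | true, O => 1
  | _, _ => -1

/-- recursive signed sum -/
def gsum : Bool → List Letter → ℤ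
  | _, [] => 0
  | e, c :: t => lval e c + gsum (!e) t

lemma lval_not (e : Bool) (c : Letter) : lval (!e) c = - lval e c := by
  cases e <;> cases c <;> rfl

@[simp] lemma beq_letter (a b : Letter) : (a == b) = decide (a = b) := by
  cases a <;> cases b <;> rfl

lemma gsum_enumFrom (w : List Letter) : ∀ n : ℕ,
    ((((w.zipIdx n).map Prod.swap).filter (fun p => p.1 % 2 == 1 && p.2 == O)).length : ℤ)
      + (((w.zipIdx n).map Prod.swap).filter (fun p => p.1 % 2 == 0 && p.2 == U)).length
      - (((w.zipIdx n).map Prod.swap).filter (fun p => p.1 % 2 == 0 && p.2 == O)).length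
      - (((w.zipIdx n).map Prod.swap).filter (fun p => p.1 % 2 == 1 && p.2 == U)).length
      = gsum (n % 2 == 1) w := by
  induction w with
  | nil => intro n; simp [gsum]
  | cons c t ih =>
    intro n
    rcases Nat.mod_two_eq_zero_or_one n with hn | hn
    · have h2 : (n + 1) % 2 = 1 := by omega
      cases c <;>
        simp_all [List.zipIdx_cons, List.map_cons, List.filter_cons, gsum, lval] <;>
        · have h3 := ih (n + 1)
          simp [h2] at h3
          omega
    · have h2 : (n + 1) % 2 = 0 := by omega
      cases c <;>
        simp_all [List.zipIdx_cons, List.map_cons, List.filter_cons, gsum, lval] <;>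
        · have h3 := ih (n + 1)
          simp [h2] at h3
          omega

lemma twoPhi_eq_gsum (w : List Letter) : twoPhi w = gsum false w := by
  have := gsum_enumFrom w 0
  simpa [twoPhi, NOe, NUo, NOo, NUe] using this

lemma gsum_reduce (e : Bool) (a b : List Letter) (x : Letter) :
    gsum e (a ++ x :: x :: b) = gsum e (a ++ b) := by
  induction a generalizing e with
  | nil => simp [gsum, lval_not]
  | cons c t ih => simp [gsum, ih]

lemma twoPhi_reduce {w w' : List Letter} (h : Reduces w w') : twoPhi w = twoPhi w' := by
  obtain ⟨a, b, x, rfl, rfl⟩ := h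
  simp [twoPhi_eq_gsum, gsum_reduce]

lemma length_reduce {w w' : List Letter} (h : Reduces w w') : w.length = w'.length + 2 := by
  obtain ⟨a, b, x, rfl, rfl⟩ := h
  simp; omega

lemma reducesN_facts {k : ℕ} {w w' : List Letter} (h : ReducesN k w w') :
    w.length = w'.length + 2 * k ∧ twoPhi w = twoPhi w' := by
  induction h with
  | refl w => simp
  | step h1 h2 ih =>
    obtain ⟨hl, hp⟩ := ih
    exact ⟨by rw [length_reduce h1]; omega, by rw [twoPhi_reduce h1, hp]⟩

lemma letter_eq_of_ne {a b c : Letter} (h1 : a ≠ b) (h2 : b ≠ c) : a = c := by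
  cases a <;> cases b <;> cases c <;> simp_all

theorem gsum_alt (e : Bool) : (w : List Letter) → w.Chain' (· ≠ ·) → Even w.length →
    gsum e w = (w.length : ℤ) * lval e (w.headD O)
  | [], _, _ => by simp [gsum]
  | [c], _, hev => by simp at hev
  | c :: d :: t, hch, hev => by
    have hcd : c ≠ d := (List.isChain_cons_cons.mp hch).1
    have hdt : (d :: t).Chain' (· ≠ ·) := (List.isChain_cons_cons.mp hch).2
    have ht : t.Chain' (· ≠ ·) := hdt.tail
    have hevt : Even t.length := by
      rcases hev with ⟨m, hm⟩; simp at hm; exact ⟨m - 1, by omega⟩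
    have hrec := gsum_alt e t ht hevt
    have hval : lval (!e) d = lval e c := by
      cases e <;> cases c <;> cases d <;> simp_all [lval]
    match t, ht, hevt, hrec with
    | [], _, _, _ => simp [gsum, hval]; ring
    | c' :: t', ht, hevt, hrec =>
      have hc' : c' = c := letter_eq_of_ne (List.isChain_cons_cons.mp hdt).1.symm hcd.symm
      subst hc'
      simp only [gsum, Bool.not_not] at hrec ⊢
      rw [hrec]
      simp only [List.headD, List.length_cons]
      rw [hval]
      push_cast
      ring

lemma alt_length {w : List Letter} (hch : w.Chain' (· ≠ ·)) (hev : Even w.length) :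
    (twoPhi w).natAbs = w.length := by
  rw [twoPhi_eq_gsum, gsum_alt false w hch hev]
  cases h : w.headD O <;> simp [lval]

theorem stmt12 (w w' : List Letter) (k : ℕ) (h : Even w.length)
    (hk : ReducesN k w w') (ha : CyclicAlternating w') :
    w.length = 2 * k + 2 * (Phi w).natAbs := by
  obtain ⟨hl, hp⟩ := reducesN_facts hk
  have hev' : Even w'.length := by
    rcases h with ⟨m, hm⟩; exact ⟨m - k, by omega⟩
  have h1 : (twoPhi w').natAbs = w'.length := alt_length ha.1 hev'
  have h2 : (twoPhi w).natAbs = w'.length := by rw [hp, h1]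
  have h3 : Even (twoPhi w).natAbs := by rw [h2]; exact hev'
  obtain ⟨m, hm⟩ := h3
  unfold Phi
  omega
end

section
/- If (w₁, w₂) is a well-balanced pair of words over {O,U} (|w₁| even, #O(w₁) = #U(w₂), #U(w₁) = #O(w₂)), then #O(w₁) ≡ #U(w₁) ≡ #O(w₂) ≡ #U(w₂) (mod 2), and moreover Φ(w₁) ≡ Φ(w₂) (mod 2). -/
open Letter

-- generalized count over enumFrom
def Ngen (c : Letter) (k n : ℕ) (w : List Letter) : ℕ :=
  (((w.zipIdx n).map Prod.swap).filter (fun p => p.1 % 2 == k && p.2 == c)).length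

lemma Ngen_cons (c : Letter) (k n : ℕ) (x : Letter) (w : List Letter) :
    Ngen c k n (x :: w) = (if n % 2 == k && x == c then 1 else 0) + Ngen c k (n+1) w := by
  simp only [Ngen, List.zipIdx_cons, List.map_cons, Prod.swap, List.filter]
  split <;> split <;> simp_all <;> omega

lemma Ngen_shift (c : Letter) (k : ℕ) : ∀ (w : List Letter) (n : ℕ),
    Ngen c k (n+2) w = Ngen c k n w := by
  intro w
  induction w with
  | nil => intro n; rfl
  | cons x w ih =>
    intro n
    rw [Ngen_cons, Ngen_cons]
    have : (n+2) % 2 = n % 2 := by omega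
    rw [this, ih]

@[simp] lemma beqOO : (O == O) = true := rfl
@[simp] lemma beqUU : (U == U) = true := rfl
@[simp] lemma beqOU : (O == U) = false := rfl
@[simp] lemma beqUO : (U == O) = false := rfl

lemma NOe_eq (w : List Letter) : NOe w = Ngen O 1 0 w := rfl
lemma NOo_eq (w : List Letter) : NOo w = Ngen O 0 0 w := rfl
lemma NUe_eq (w : List Letter) : NUe w = Ngen U 1 0 w := rfl
lemma NUo_eq (w : List Letter) : NUo w = Ngen U 0 0 w := rfl

lemma Ngen_cons2 (c : Letter) (k : ℕ) (x y : Letter) (w : List Letter) :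
    Ngen c k 0 (x :: y :: w) = (if 0 % 2 == k && x == c then 1 else 0)
      + (if 1 % 2 == k && y == c then 1 else 0) + Ngen c k 0 w := by
  rw [Ngen_cons, Ngen_cons, show (0:ℕ)+1+1 = 0+2 by rfl, Ngen_shift]
  ring

lemma twoPhi_cons2 (x y : Letter) (w : List Letter) :
    twoPhi (x :: y :: w) = twoPhi w + (if x = O then -1 else 1) + (if y = O then 1 else -1) := by
  unfold twoPhi
  rw [NOe_eq, NOo_eq, NUe_eq, NUo_eq, Ngen_cons2, Ngen_cons2, Ngen_cons2, Ngen_cons2,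
    NOe_eq, NOo_eq, NUe_eq, NUo_eq]
  cases x <;> cases y <;> simp [beq_iff_eq] <;> push_cast <;> ring

lemma count_sum (w : List Letter) : countO w + countU w = w.length := by
  induction w with
  | nil => rfl
  | cons x w ih =>
    unfold countO countU at *
    cases x <;> simp [List.count_cons, beq_iff_eq] <;> omega

lemma key : ∀ (n : ℕ) (w : List Letter), w.length ≤ n → Even w.length →
    twoPhi w ≡ 2 * countO w * countU w [ZMOD 4] := by
  intro n
  induction n with
  | zero =>
    intro w hw _
    have : w = [] := List.eq_nil_of_length_eq_zero (by omega)
    subst this; simp [Int.ModEq, twoPhi, NOe, NOo, NUe, NUo, countO, countU]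
  | succ n ih =>
    intro w hw he
    match w with
    | [] => simp [Int.ModEq, twoPhi, NOe, NOo, NUe, NUo, countO, countU]
    | [x] => simp at he
    | x :: y :: w =>
      have hlen : w.length ≤ n := by simp at hw; omega
      have heven : Even w.length := by simpa [Nat.even_add_one, parity_simps] using he
      have IH := ih w hlen heven
      have hab : Even (countO w + countU w) := by rw [count_sum]; exact heven
      rw [twoPhi_cons2]
      have hO : ∀ (z : Letter) (v : List Letter), (countO (z :: v) : ℤ) = countO v + (if z = O then 1 else 0) := by
        intro z v; unfold countO; cases z <;> simp [List.count_cons]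
      have hU : ∀ (z : Letter) (v : List Letter), (countU (z :: v) : ℤ) = countU v + (if z = U then 1 else 0) := by
        intro z v; unfold countU; cases z <;> simp [List.count_cons]
      have e1 : (countO (x :: y :: w) : ℤ) = countO w + (if x = O then 1 else 0) + (if y = O then 1 else 0) := by
        rw [hO, hO]; ring
      have e2 : (countU (x :: y :: w) : ℤ) = countU w + (if x = U then 1 else 0) + (if y = U then 1 else 0) := by
        rw [hU, hU]; ring
      have IH' : (4:ℤ) ∣ (twoPhi w - 2 * countO w * countU w) := Int.ModEq.dvd IH.symm
      obtain ⟨m, hm⟩ := IH'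
      obtain ⟨p, hp⟩ := hab
      have hp2 : (countO w : ℤ) + countU w = 2 * p := by push_cast; omega
      show _ % 4 = _ % 4
      have : (2 : ℤ) * countO (x :: y :: w) * countU (x :: y :: w)
          = 2 * (countO w : ℤ) * countU w
            + (2 * (countO w : ℤ) * ((if x = U then 1 else 0) + (if y = U then 1 else 0))
             + 2 * (countU w : ℤ) * ((if x = O then 1 else 0) + (if y = O then 1 else 0))
             + 2 * ((if x = O then 1 else 0) + (if y = O then 1 else 0)) * ((if x = U then 1 else 0) + (if y = U then 1 else 0))) := by
        rw [e1, e2]; ring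
      rw [this]
      cases x <;> cases y <;> simp <;> omega

lemma phi_mod (w : List Letter) (h : Even w.length) :
    Phi w ≡ (countO w : ℤ) * countU w [ZMOD 2] := by
  have hk := key w.length w le_rfl h
  have hd : (4:ℤ) ∣ twoPhi w - 2 * countO w * countU w := hk.symm.dvd
  obtain ⟨m, hm⟩ := hd
  have hm' : twoPhi w - 2 * ((countO w : ℤ) * countU w) = 4 * m := by linarith [hm]
  have hPhi : Phi w = twoPhi w / 2 := rfl
  show Phi w % 2 = _ % 2
  rw [hPhi]
  generalize (countO w : ℤ) * countU w = c at hm' ⊢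
  omega

theorem stmt13 (w₁ w₂ : List Letter) (h1 : Even w₁.length)
    (h2 : countO w₁ = countU w₂) (h3 : countU w₁ = countO w₂) :
    countO w₁ % 2 = countU w₁ % 2 ∧ countU w₁ % 2 = countO w₂ % 2 ∧
      countO w₂ % 2 = countU w₂ % 2 ∧ Phi w₁ ≡ Phi w₂ [ZMOD 2] := by
  have c1 := count_sum w₁
  have c2 := count_sum w₂
  have hl2 : w₂.length = w₁.length := by omega
  have h1' : Even w₂.length := hl2 ▸ h1
  obtain ⟨p, hp⟩ := h1
  refine ⟨by omega, by omega, by omega, ?_⟩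
  have P1 := phi_mod w₁ ⟨p, hp⟩
  have P2 := phi_mod w₂ h1'
  have : (countO w₁ : ℤ) * countU w₁ = (countO w₂ : ℤ) * countU w₂ := by
    rw [h2, h3]; ring
  exact (P1.trans (this ▸ Int.ModEq.refl _)).trans P2.symm
end
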